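/- Let G be a finite simple connected graph with n ≥ 3 vertices. Then G induces a 4-periodic Grover walk if and only if G is isomorphic to a complete bipartite graph K_{r,s} for some positive integers r, s with r + s = n. -/

import Mathlib

open Matrix SimpleGraph

/-- The Grover transfer matrix `U = U(G)` of a finite simple graph `G`, a `2m × 2m`
complex matrix indexed by the darts (symmetric arcs) of `G`.  For darts `e, f`,
`U e f = 2/deg(t(f)) - 1` if `f = e⁻¹`, `U e f = 2/deg(t(f))` if `t(f) = o(e)` and
`f ≠ e⁻¹`, and `U e f = 0` otherwise. -/
noncomputable def groverMatrix {V : Type*} [Fintype V] [DecidableEq V]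
    (G : SimpleGraph V) [DecidableRel G.Adj] : Matrix G.Dart G.Dart ℂ :=
  fun e f =>
    if f = e.symm then 2 / (G.degree f.snd : ℂ) - 1
    else if f.snd = e.fst then 2 / (G.degree f.snd : ℂ)
    else 0

/-- `G` induces a `k`-periodic Grover walk: `U ^ k = 1` and `U ^ j ≠ 1` for `1 ≤ j < k`. -/
def InducesPeriodicGroverWalk {V : Type*} [Fintype V] [DecidableEq V]
    (G : SimpleGraph V) [DecidableRel G.Adj] (k : ℕ) : Prop :=
  groverMatrix G ^ k = 1 ∧ ∀ j : ℕ, 1 ≤ j → j < k → groverMatrix G ^ j ≠ 1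

/-- The transition matrix of the isotropic random walk on `G`:
`T u v = 1/deg(u)` if `u ∼ v` and `0` otherwise. -/
noncomputable def transitionMatrix {V : Type*} [Fintype V]
    (G : SimpleGraph V) [DecidableRel G.Adj] : Matrix V V ℝ :=
  fun u v => if G.Adj u v then 1 / (G.degree u : ℝ) else 0

namespace GroverAux
open Finset

variable {V : Type*} [Fintype V] [DecidableEq V] (G : SimpleGraph V) [DecidableRel G.Adj]

lemma dart_snd_fiber_card_eq_degree (v : V) :
    #{d : G.Dart | d.snd = v} = G.degree v := by
  rw [← G.dart_fst_fiber_card_eq_degree v]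
  refine Finset.card_bij' (fun d _ => d.symm) (fun d _ => d.symm) ?_ ?_ ?_ ?_ <;>
    intro a ha <;> simp only [mem_filter, mem_univ, true_and, Dart.symm_symm] at ha ⊢ <;>
    first | exact ha | rfl

variable {G}

lemma deg_pos_fst (e : G.Dart) : 0 < G.degree e.fst :=
  (G.degree_pos_iff_exists_adj e.fst).2 ⟨e.snd, e.adj⟩

lemma deg_pos_snd (e : G.Dart) : 0 < G.degree e.snd :=
  (G.degree_pos_iff_exists_adj e.snd).2 ⟨e.fst, e.adj.symm⟩

lemma deg_ne_zero {v : V} (h : 0 < G.degree v) : (G.degree v : ℂ) ≠ 0 := by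
  exact_mod_cast Nat.cast_ne_zero.2 h.ne'

lemma grover_apply (e f : G.Dart) :
    groverMatrix G e f =
      (if f.snd = e.fst then 2 / (G.degree f.snd : ℂ) else 0) -
        (if f = e.symm then 1 else 0) := by
  unfold groverMatrix
  by_cases h : f = e.symm
  · subst h; simp [Dart.symm]
  · simp [h]

lemma sum_dart_snd (v : V) (c : ℂ) :
    ∑ f : G.Dart, (if f.snd = v then c else 0) = (G.degree v : ℂ) * c := by
  have : ∑ f : G.Dart, (if f.snd = v then c else 0)
      = ∑ f ∈ ({d : G.Dart | d.snd = v} : Finset _), c := (Finset.sum_filter _ _).symm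
  rw [this, Finset.sum_const, dart_snd_fiber_card_eq_degree, nsmul_eq_mul]


omit [DecidableEq V] in
lemma sum_dart_eq_single {a b : V} (h : G.Adj a b) (c : G.Dart → ℂ)
    (hc : ∀ f : G.Dart, f.toProd ≠ (a, b) → c f = 0) :
    ∑ f : G.Dart, c f = c ⟨(a, b), h⟩ := by
  refine Finset.sum_eq_single _ (fun f _ hf => hc f ?_) (fun h' => absurd (Finset.mem_univ _) h')
  intro hp; exact hf (Dart.ext _ _ hp)

omit [DecidableEq V] in
lemma sum_dart_eq_zero {a b : V} (h : ¬ G.Adj a b) (c : G.Dart → ℂ)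
    (hc : ∀ f : G.Dart, f.toProd ≠ (a, b) → c f = 0) :
    ∑ f : G.Dart, c f = 0 := by
  refine Finset.sum_eq_zero fun f _ => hc f ?_
  intro hp
  have := f.adj
  rw [show f.toProd.1 = a from congrArg Prod.fst hp, show f.toProd.2 = b from congrArg Prod.snd hp] at this
  exact h this

lemma chi_comm (a b : V) : (if a = b then (1:ℂ) else 0) = (if b = a then (1:ℂ) else 0) := by
  by_cases h : a = b <;> simp [h, Ne.symm, eq_comm]

lemma grover_sq_apply (e g : G.Dart) :
    (groverMatrix G * groverMatrix G) e g =
      if G.Adj g.snd e.fst then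
        (2 / (G.degree e.fst : ℂ) - if g.snd = e.snd then 1 else 0) *
        (2 / (G.degree g.snd : ℂ) - if g.fst = e.fst then 1 else 0)
      else 0 := by
  rw [Matrix.mul_apply]
  have hvan : ∀ f : G.Dart, f.toProd ≠ (g.snd, e.fst) →
      groverMatrix G e f * groverMatrix G f g = 0 := by
    intro f hf
    have hno : ¬ (f.fst = g.snd ∧ f.snd = e.fst) := fun ⟨ha, hb⟩ => hf (Prod.ext ha hb)
    rcases not_and_or.mp hno with h1 | h2
    · -- f.fst ≠ g.snd : second factor zero
      have : groverMatrix G f g = 0 := by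
        unfold groverMatrix
        have hne : ¬ g = f.symm := by
          intro h; apply h1; rw [h]; rfl
        have hne2 : ¬ g.snd = f.fst := by
          intro h; exact h1 h.symm
        simp [hne, hne2]
      rw [this, mul_zero]
    · have : groverMatrix G e f = 0 := by
        unfold groverMatrix
        have hne : ¬ f = e.symm := by
          intro h; apply h2; rw [h]; rfl
        simp [hne, h2]
      rw [this, zero_mul]
  by_cases hadj : G.Adj g.snd e.fst
  · rw [sum_dart_eq_single hadj _ hvan, if_pos hadj]
    set f : G.Dart := ⟨(g.snd, e.fst), hadj⟩ with hf
    have h1 : groverMatrix G e f = 2 / (G.degree e.fst : ℂ) - (if g.snd = e.snd then 1 else 0) := by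
      rw [grover_apply]
      have hsnd : f.snd = e.fst := rfl
      rw [if_pos hsnd, hsnd]
      congr 1
      by_cases h : g.snd = e.snd
      · rw [if_pos, if_pos h]; apply Dart.ext; show (g.snd, e.fst) = (e.snd, e.fst); rw [h]
      · rw [if_neg, if_neg h]; intro hc; apply h
        exact congrArg (fun d => d.toProd.1) hc
    have h2 : groverMatrix G f g = 2 / (G.degree g.snd : ℂ) - (if g.fst = e.fst then 1 else 0) := by
      rw [grover_apply]
      have hsnd : g.snd = f.fst := rfl
      rw [if_pos hsnd]
      congr 1
      by_cases h : g.fst = e.fst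
      · rw [if_pos, if_pos h]; apply Dart.ext; show (g.fst, g.snd) = (e.fst, g.snd); rw [h]
      · rw [if_neg, if_neg h]; intro hc; apply h
        exact congrArg (fun d => d.toProd.1) hc
    rw [h1, h2]
  · rw [sum_dart_eq_zero hadj _ hvan, if_neg hadj]

lemma grover_mul_transpose (G : SimpleGraph V) [DecidableRel G.Adj] :
    groverMatrix G * (groverMatrix G)ᵀ = 1 := by
  ext e g
  rw [Matrix.mul_apply]
  simp only [Matrix.transpose_apply]
  have key : ∀ f : G.Dart, groverMatrix G e f * groverMatrix G g f =
      ((if f.snd = e.fst then 2 / (G.degree f.snd : ℂ) else 0) - (if f = e.symm then 1 else 0)) *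
      ((if f.snd = g.fst then 2 / (G.degree f.snd : ℂ) else 0) - (if f = g.symm then 1 else 0)) := by
    intro f; rw [grover_apply, grover_apply]
  simp only [key, sub_mul, mul_sub]
  rw [Finset.sum_sub_distrib, Finset.sum_sub_distrib, Finset.sum_sub_distrib]
  have h1 : ∑ f : G.Dart, (if f.snd = e.fst then 2 / (G.degree f.snd : ℂ) else 0) *
      (if f.snd = g.fst then 2 / (G.degree f.snd : ℂ) else 0)
      = if g.fst = e.fst then 4 / (G.degree e.fst : ℂ) else 0 := by
    by_cases h : g.fst = e.fst
    · simp only [h]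
      have : ∀ f : G.Dart, (if f.snd = e.fst then 2 / (G.degree f.snd : ℂ) else 0) *
          (if f.snd = e.fst then 2 / (G.degree f.snd : ℂ) else 0)
          = if f.snd = e.fst then (2 / (G.degree e.fst : ℂ)) * (2 / (G.degree e.fst : ℂ)) else 0 := by
        intro f
        by_cases hf : f.snd = e.fst
        · rw [if_pos hf, hf]; simp
        · rw [if_neg hf]; simp [hf]
      simp only [this]
      rw [sum_dart_snd]
      have hd : (G.degree e.fst : ℂ) ≠ 0 := deg_ne_zero (deg_pos_fst e)
      split_ifs with h'
      · field_simp; ring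
      · simp at h'
    · rw [if_neg h]
      apply Finset.sum_eq_zero
      intro f _
      by_cases h1 : f.snd = e.fst
      · have : ¬ f.snd = g.fst := fun hc => h (hc ▸ h1 ▸ rfl : g.fst = e.fst)
        simp [this]
      · simp [h1]
  have h2 : ∑ f : G.Dart, (if f.snd = e.fst then 2 / (G.degree f.snd : ℂ) else 0) *
      (if f = g.symm then (1:ℂ) else 0)
      = if g.fst = e.fst then 2 / (G.degree e.fst : ℂ) else 0 := by
    rw [Finset.sum_eq_single g.symm]
    · have hs : g.symm.snd = g.fst := rfl
      by_cases h : g.fst = e.fst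
      · rw [if_pos h]; simp [hs, h]; rw [hs, h]
      · rw [if_neg h]; simp [hs, h]
    · intro f _ hf; simp [hf]
    · intro h; exact absurd (Finset.mem_univ _) h
  have h3 : ∑ f : G.Dart, (if f = e.symm then (1:ℂ) else 0) *
      (if f.snd = g.fst then 2 / (G.degree f.snd : ℂ) else 0)
      = if g.fst = e.fst then 2 / (G.degree e.fst : ℂ) else 0 := by
    rw [Finset.sum_eq_single e.symm]
    · have hs : e.symm.snd = e.fst := rfl
      by_cases h : g.fst = e.fst
      · rw [if_pos h]; simp [hs, h]; rw [hs]
      · rw [if_neg h]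
        have : ¬ e.symm.snd = g.fst := by rw [hs]; exact fun hc => h hc.symm
        simp [this]
        exact fun hc => absurd hc.symm h
    · intro f _ hf; simp [hf]
    · intro h; exact absurd (Finset.mem_univ _) h
  have h4 : ∑ f : G.Dart, (if f = e.symm then (1:ℂ) else 0) * (if f = g.symm then (1:ℂ) else 0)
      = if e = g then 1 else 0 := by
    rw [Finset.sum_eq_single e.symm]
    · by_cases h : e = g
      · subst h; simp
      · have : ¬ (e.symm = g.symm) := fun hc => h (by
          have := congrArg Dart.symm hc; rwa [Dart.symm_symm, Dart.symm_symm] at this)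
        simp [h, this]
    · intro f _ hf; simp [hf]
    · intro h; exact absurd (Finset.mem_univ _) h
  rw [h1, h2, h3, h4]
  by_cases h : e = g
  · subst h
    rw [Matrix.one_apply_eq]
    simp only [eq_self_iff_true, if_true]
    have hd : (G.degree e.fst : ℂ) ≠ 0 := deg_ne_zero (deg_pos_fst e)
    field_simp
    ring
  · rw [Matrix.one_apply_ne (fun hc => h hc), if_neg h]
    by_cases hfst : g.fst = e.fst
    · simp only [if_pos hfst]; ring
    · simp only [if_neg hfst]; ring

lemma transpose_grover_mul (G : SimpleGraph V) [DecidableRel G.Adj] :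
    (groverMatrix G)ᵀ * groverMatrix G = 1 :=
  mul_eq_one_comm.mp (grover_mul_transpose G)

lemma sq_transpose_mul (G : SimpleGraph V) [DecidableRel G.Adj] :
    (groverMatrix G * groverMatrix G)ᵀ * (groverMatrix G * groverMatrix G) = 1 := by
  set U := groverMatrix G
  rw [Matrix.transpose_mul, mul_assoc, ← mul_assoc Uᵀ U U, transpose_grover_mul, one_mul,
    transpose_grover_mul]

lemma pow_four_eq : (groverMatrix G) ^ 4 = (groverMatrix G * groverMatrix G) * (groverMatrix G * groverMatrix G) := by
  rw [show (4:ℕ) = 2*2 from rfl, pow_mul, sq, sq]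

lemma pow4_iff_symm (G : SimpleGraph V) [DecidableRel G.Adj] :
    (groverMatrix G) ^ 4 = 1 ↔
      (groverMatrix G * groverMatrix G)ᵀ = groverMatrix G * groverMatrix G := by
  constructor
  · intro h4
    have h4' := pow_four_eq (G := G) ▸ h4
    calc (groverMatrix G * groverMatrix G)ᵀ
        = (groverMatrix G * groverMatrix G)ᵀ * ((groverMatrix G * groverMatrix G) * (groverMatrix G * groverMatrix G)) := by
          rw [h4', mul_one]
      _ = ((groverMatrix G * groverMatrix G)ᵀ * (groverMatrix G * groverMatrix G)) * (groverMatrix G * groverMatrix G) := by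
          rw [← mul_assoc]
      _ = groverMatrix G * groverMatrix G := by rw [sq_transpose_mul, one_mul]
  · intro hs
    rw [pow_four_eq]
    calc (groverMatrix G * groverMatrix G) * (groverMatrix G * groverMatrix G)
        = (groverMatrix G * groverMatrix G)ᵀ * (groverMatrix G * groverMatrix G) := by rw [hs]
      _ = 1 := sq_transpose_mul G

omit [DecidableEq V] in
lemma dart_fst_ne_snd (e : G.Dart) : e.fst ≠ e.snd := G.ne_of_adj e.adj

lemma grover_diag (e : G.Dart) : groverMatrix G e e = 0 := by
  unfold groverMatrix
  have h1 : ¬ e = e.symm := by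
    intro hc
    exact dart_fst_ne_snd e (congrArg (fun d => d.toProd.1) hc)
  have h2 : ¬ e.snd = e.fst := fun hc => dart_fst_ne_snd e hc.symm
  simp [h1, h2]

lemma grover_ne_one (e : G.Dart) : groverMatrix G ≠ 1 := by
  intro h
  have := congrFun (congrFun h e) e
  rw [grover_diag, Matrix.one_apply_eq] at this
  exact zero_ne_one this

lemma num_aux {a b : ℕ} (ha : a ≠ 0) (hb : b ≠ 0)
    (h : (2 / (a:ℂ) - 1) * (2 / (b:ℂ) - 1) = 1) : a + b = 2 := by
  have ha' : (a:ℂ) ≠ 0 := Nat.cast_ne_zero.2 ha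
  have hb' : (b:ℂ) ≠ 0 := Nat.cast_ne_zero.2 hb
  field_simp at h
  have : ((a + b : ℕ) : ℂ) = ((2:ℕ):ℂ) := by push_cast; linear_combination -h/2
  exact_mod_cast this

lemma two_div_deg_ne_zero {v : V} (h : 0 < G.degree v) : 2 / (G.degree v : ℂ) ≠ 0 :=
  div_ne_zero two_ne_zero (deg_ne_zero h)

section Extraction

variable (hsym : ∀ e g : G.Dart, (groverMatrix G * groverMatrix G) e g
    = (groverMatrix G * groverMatrix G) g e)

include hsym

lemma no_triangle {a b c : V} (h1 : G.Adj a b) (h2 : G.Adj c a) (h3 : G.Adj b c) : False := by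
  set e : G.Dart := ⟨(a, b), h1⟩
  set g : G.Dart := ⟨(c, a), h2⟩
  have hs := hsym e g
  rw [grover_sq_apply, grover_sq_apply] at hs
  have hga : ¬ G.Adj g.snd e.fst := by simp only [e, g]; exact G.irrefl
  have hadj' : G.Adj e.snd g.fst := h3
  rw [if_neg hga, if_pos hadj'] at hs
  have hba : ¬ (e.snd = g.snd) := fun hc => G.ne_of_adj h1 ((hc : b = a)).symm
  have hac : ¬ (e.fst = g.fst) := fun hc => G.ne_of_adj h2 ((hc : a = c)).symm
  rw [if_neg hba, if_neg hac, sub_zero, sub_zero] at hs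
  exact mul_ne_zero (two_div_deg_ne_zero (deg_pos_fst g)) (two_div_deg_ne_zero (deg_pos_snd e)) hs.symm

lemma cross_adj {u x y b : V} (h1 : G.Adj u x) (h2 : G.Adj y b) (h3 : G.Adj b u)
    (hbx : b ≠ x) (hyu : y ≠ u) : G.Adj x y := by
  set e : G.Dart := ⟨(u, x), h1⟩
  set g : G.Dart := ⟨(y, b), h2⟩
  have hs := hsym e g
  rw [grover_sq_apply, grover_sq_apply] at hs
  rw [if_pos (h3 : G.Adj g.snd e.fst)] at hs
  rw [if_neg (hbx : ¬ (g.snd = e.snd)), if_neg (hyu : ¬ (g.fst = e.fst)), sub_zero, sub_zero] at hs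
  by_contra hxy
  rw [if_neg (fun hc => hxy (hc : G.Adj e.snd g.fst))] at hs
  exact mul_ne_zero (two_div_deg_ne_zero (deg_pos_fst e)) (two_div_deg_ne_zero (deg_pos_snd g)) hs

end Extraction

lemma iso_of_partition (p : V → Prop) [DecidablePred p]
    (hAdj : ∀ v w, G.Adj v w ↔ (p v ∧ ¬ p w ∨ ¬ p v ∧ p w)) :
    Nonempty (G ≃g completeBipartiteGraph (Fin (Fintype.card {v // p v}))
      (Fin (Fintype.card {v // ¬ p v}))) := by
  classical
  let e1 := (Equiv.sumCompl p).symm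
  let e2 := Equiv.sumCongr (Fintype.equivFin {v // p v}) (Fintype.equivFin {v // ¬ p v})
  refine ⟨⟨e1.trans e2, ?_⟩⟩
  intro a b
  show (completeBipartiteGraph _ _).Adj (e2 (e1 a)) (e2 (e1 b)) ↔ G.Adj a b
  rw [hAdj]
  by_cases ha : p a <;> by_cases hb : p b <;>
    simp [e1, e2, Equiv.sumCompl_symm_apply_of_pos, Equiv.sumCompl_symm_apply_of_neg,
      ha, hb, completeBipartiteGraph]

lemma forward_structure (hG : G.Connected) (hn : 3 ≤ Fintype.card V)
    (htri : ∀ {a b c : V}, G.Adj a b → G.Adj c a → G.Adj b c → False)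
    (hcross : ∀ {u x y b : V}, G.Adj u x → G.Adj y b → G.Adj b u →
        b ≠ x → y ≠ u → G.Adj x y) :
    ∃ r s : ℕ, 0 < r ∧ 0 < s ∧ r + s = Fintype.card V ∧
      Nonempty (G ≃g completeBipartiteGraph (Fin r) (Fin s)) := by
  classical
  -- get an edge
  obtain ⟨u, x, h1⟩ : ∃ u x : V, G.Adj u x := by
    obtain ⟨v, w, hvw⟩ := Fintype.exists_pair_of_one_lt_card (α := V) (by omega)
    obtain ⟨pw⟩ := hG.preconnected v w
    cases pw with
    | nil => exact absurd rfl hvw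
    | cons h q => exact ⟨_, _, h⟩
  -- the bipartition predicate
  set p : V → Prop := fun v => G.Adj x v with hp
  -- closure step
  have step : ∀ a z : V, (G.Adj x a ∨ G.Adj u a) → G.Adj a z → (G.Adj x z ∨ G.Adj u z) := by
    intro a z ha hz
    rcases ha with ha | ha
    · by_cases hzu : z = u
      · subst hzu; exact Or.inl h1.symm
      by_cases hzx : z = x
      · subst hzx; exact Or.inr h1
      by_cases hau : a = u
      · subst hau; exact Or.inr hz
      · exact Or.inr (hcross hz h1 ha (fun hc => hzx hc.symm) (fun hc => hau hc.symm)).symm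
    · by_cases hzx : z = x
      · subst hzx; exact Or.inr h1
      by_cases hzu : z = u
      · subst hzu; exact Or.inl h1.symm
      by_cases hax : a = x
      · subst hax; exact Or.inl hz
      · exact Or.inl (hcross hz h1.symm ha (fun hc => hzu hc.symm) (fun hc => hax hc.symm)).symm
  -- cover
  have cover : ∀ v : V, G.Adj x v ∨ G.Adj u v := by
    have key : ∀ (a v : V) (w : G.Walk a v), (G.Adj x a ∨ G.Adj u a) → (G.Adj x v ∨ G.Adj u v) := by
      intro a v w
      induction w with
      | nil => exact id
      | cons h q ih => exact fun ha => ih (step _ _ ha h)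
    intro v
    obtain ⟨w⟩ := hG.preconnected u v
    exact key u v w (Or.inl h1.symm)
  -- disjoint
  have disj : ∀ v : V, ¬ (G.Adj x v ∧ G.Adj u v) := by
    rintro v ⟨hxv, huv⟩
    exact htri hxv h1 huv.symm
  have hnp : ∀ v, ¬ p v ↔ G.Adj u v := by
    intro v
    constructor
    · intro h; rcases cover v with h' | h'
      · exact absurd h' h
      · exact h'
    · intro h hc; exact disj v ⟨hc, h⟩
  -- adjacency characterization
  have hAdj : ∀ v w, G.Adj v w ↔ (p v ∧ ¬ p w ∨ ¬ p v ∧ p w) := by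
    intro v w
    constructor
    · intro hvw
      by_cases hv : p v <;> by_cases hw : p w
      · exact absurd (htri hvw hv hw.symm) not_false
      · exact Or.inl ⟨hv, hw⟩
      · exact Or.inr ⟨hv, hw⟩
      · exact absurd (htri hvw ((hnp v).mp hv) ((hnp w).mp hw).symm) not_false
    · rintro (⟨hv, hw⟩ | ⟨hv, hw⟩)
      · have huw : G.Adj u w := (hnp w).mp hw
        by_cases hvu : v = u
        · subst hvu; exact huw
        by_cases hwx : w = x
        · subst hwx; exact hv.symm
        · exact hcross hv huw.symm h1 (fun hc => hvu hc.symm) hwx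
      · have huv : G.Adj u v := (hnp v).mp hv
        by_cases hwu : w = u
        · subst hwu; exact huv.symm
        by_cases hvx : v = x
        · subst hvx; exact hw
        · exact (hcross hw huv.symm h1 (fun hc => hwu hc.symm) hvx).symm
  refine ⟨Fintype.card {v // p v}, Fintype.card {v // ¬ p v}, ?_, ?_, ?_, iso_of_partition p hAdj⟩
  · exact Fintype.card_pos_iff.2 ⟨⟨u, h1.symm⟩⟩
  · exact Fintype.card_pos_iff.2 ⟨⟨x, G.irrefl⟩⟩
  · rw [← Fintype.card_sum]
    exact Fintype.card_congr (Equiv.sumCompl p)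

section Reverse

variable (p : V → Prop) [DecidablePred p]
variable (hAdj : ∀ v w, G.Adj v w ↔ (p v ∧ ¬ p w ∨ ¬ p v ∧ p w))

include hAdj

lemma degree_eq_of_part {v w : V} (h : p v ↔ p w) : G.degree v = G.degree w := by
  unfold SimpleGraph.degree
  congr 1
  ext z
  simp only [mem_neighborFinset, hAdj]
  tauto

lemma degree_add_of_dart (e : G.Dart) :
    G.degree e.fst + G.degree e.snd = Fintype.card V := by
  classical
  have he := (hAdj e.fst e.snd).mp e.adj
  have h1 : G.degree e.fst = (Finset.univ.filter (fun z => ¬ (p z ↔ p e.fst))).card := by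
    unfold SimpleGraph.degree; congr 1; ext z
    simp only [mem_neighborFinset, Finset.mem_filter, Finset.mem_univ, true_and, hAdj]
    tauto
  have h2 : G.degree e.snd = (Finset.univ.filter (fun z => (p z ↔ p e.fst))).card := by
    unfold SimpleGraph.degree; congr 1; ext z
    simp only [mem_neighborFinset, Finset.mem_filter, Finset.mem_univ, true_and, hAdj]
    tauto
  rw [h1, h2, add_comm, Finset.card_filter_add_card_filter_not, Finset.card_univ]

lemma sq_symm_of_bip :
    (groverMatrix G * groverMatrix G)ᵀ = groverMatrix G * groverMatrix G := by
  ext g e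
  rw [Matrix.transpose_apply]
  rw [grover_sq_apply, grover_sq_apply]
  have he := (hAdj e.fst e.snd).mp e.adj
  have hg := (hAdj g.fst g.snd).mp g.adj
  have hcond : G.Adj g.snd e.fst ↔ G.Adj e.snd g.fst := by
    rw [hAdj, hAdj]; tauto
  by_cases hadj : G.Adj g.snd e.fst
  · rw [if_pos hadj, if_pos (hcond.mp hadj)]
    have hxor := (hAdj g.snd e.fst).mp hadj
    have hd1 : G.degree e.fst = G.degree g.fst :=
      degree_eq_of_part p hAdj (by tauto)
    have hd2 : G.degree g.snd = G.degree e.snd :=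
      degree_eq_of_part p hAdj (by tauto)
    rw [hd1, hd2]
    have c1 : (if g.snd = e.snd then (1:ℂ) else 0) = (if e.snd = g.snd then (1:ℂ) else 0) :=
      chi_comm _ _
    have c2 : (if g.fst = e.fst then (1:ℂ) else 0) = (if e.fst = g.fst then (1:ℂ) else 0) :=
      chi_comm _ _
    rw [c1, c2]
  · rw [if_neg hadj, if_neg (fun hc => hadj (hcond.mpr hc))]

end Reverse

end GroverAux

open GroverAux

/-- **Theorem 4.1.** A finite simple connected graph `G` with `n ≥ 3`
vertices induces a `4`-periodic Grover walk iff `G` is isomorphic to a complete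
bipartite graph `K_{r,s}` with `r + s = n`. -/
theorem four_periodic_iff_completeBipartite {V : Type*} [Fintype V] [DecidableEq V]
    (G : SimpleGraph V) [DecidableRel G.Adj] (hG : G.Connected)
    (hn : 3 ≤ Fintype.card V) :
    InducesPeriodicGroverWalk G 4 ↔
      ∃ r s : ℕ, 0 < r ∧ 0 < s ∧ r + s = Fintype.card V ∧
        Nonempty (G ≃g completeBipartiteGraph (Fin r) (Fin s)) := by
  constructor
  · rintro ⟨h4, -⟩
    have hsymM := (pow4_iff_symm G).mp h4
    have hsym : ∀ e g : G.Dart, (groverMatrix G * groverMatrix G) e g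
        = (groverMatrix G * groverMatrix G) g e := by
      intro e g
      conv_lhs => rw [← hsymM]
      rfl
    exact forward_structure hG hn
      (fun h1 h2 h3 => no_triangle hsym h1 h2 h3)
      (fun h1 h2 h3 h4' h5 => cross_adj hsym h1 h2 h3 h4' h5)
  · rintro ⟨r, s, hr, hs, hrs, ⟨iso⟩⟩
    classical
    set p : V → Prop := fun v => (iso v).isLeft = true with hp
    have hK : ∀ a b : Fin r ⊕ Fin s, (completeBipartiteGraph (Fin r) (Fin s)).Adj a b ↔
        ((a.isLeft = true) ∧ ¬ (b.isLeft = true) ∨ ¬ (a.isLeft = true) ∧ (b.isLeft = true)) := by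
      intro a b; cases a <;> cases b <;> simp [completeBipartiteGraph]
    have hAdj : ∀ v w, G.Adj v w ↔ (p v ∧ ¬ p w ∨ ¬ p v ∧ p w) := by
      intro v w
      rw [← iso.map_rel_iff, hK]
    have h4 : groverMatrix G ^ 4 = 1 := (pow4_iff_symm G).mpr (sq_symm_of_bip p hAdj)
    have hadj0 : G.Adj (iso.symm (Sum.inl (⟨0, hr⟩ : Fin r)))
        (iso.symm (Sum.inr (⟨0, hs⟩ : Fin s))) := by
      exact iso.symm.map_rel_iff.mpr (by simp [completeBipartiteGraph])
    set e : G.Dart := ⟨(_, _), hadj0⟩ with he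
    have hU1 : groverMatrix G ≠ 1 := grover_ne_one e
    refine ⟨h4, ?_⟩
    intro j hj1 hj4
    interval_cases j
    · simpa using hU1
    · intro h2
      rw [sq] at h2
      have hent := congrFun (congrFun h2 e) e
      rw [grover_sq_apply, Matrix.one_apply_eq] at hent
      rw [if_pos (e.adj.symm : G.Adj e.snd e.fst), if_pos rfl, if_pos rfl] at hent
      have hsum2 : G.degree e.fst + G.degree e.snd = 2 :=
        num_aux (deg_pos_fst e).ne' (deg_pos_snd e).ne' hent
      have := degree_add_of_dart p hAdj e
      omega
    · intro h3
      apply hU1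
      calc groverMatrix G = groverMatrix G ^ 3 * groverMatrix G := by rw [h3, one_mul]
        _ = groverMatrix G ^ 4 := by rw [← pow_succ]
        _ = 1 := h4
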